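/- arXiv:2011.11056 — 2 statements merged into one kernel-verified Lean document; each statement's English description precedes it below -/
import Mathlib

section
/- Let a ≥ 15 be an integer and define F_m(x) := ((3x+17)/12)·P_{m−1}(x) − P_m(x). If F_m(x) > 0 for all real x > 1 and all integers m with 5 ≤ m < a, then F_a′(x) > 0 for all real x > 1. -/
open Polynomial Finset

/-- The polynomials `P n` defined by `P 0 = 1` and
`n * P n = X * ∑_{k=1}^n σ(k) * P (n-k)`, i.e. the coefficients of
`∏ (1 - q^j)^{-x} = ∑ P_n(x) q^n`. -/
noncomputable def P : ℕ → Polynomial ℝ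
  | 0 => 1
  | n + 1 => ((n + 1 : ℝ)⁻¹) • (X * ∑ k ∈ Finset.range (n + 1),
      ((∑ d ∈ (k + 1).divisors, d : ℕ) : ℝ) • P (n - k))

/-- `Δ a b = P (a-1) * P (b+1) - P a * P b`. -/
noncomputable def Δ (a b : ℕ) : Polynomial ℝ :=
  P (a - 1) * P (b + 1) - P a * P b

noncomputable def s (k : ℕ) : ℝ := ((∑ d ∈ k.divisors, d : ℕ) : ℝ)

lemma s_nonneg (k : ℕ) : 0 ≤ s k := by unfold s; positivity

lemma s_ge (k : ℕ) : (k : ℝ) ≤ s k := by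
  rcases Nat.eq_zero_or_pos k with h | h
  · simp [h, s]
  · have : k ∈ k.divisors := Nat.mem_divisors_self k h.ne'
    have h2 := Finset.single_le_sum (f := fun d => (d:ℕ)) (fun i _ => Nat.zero_le i) this
    unfold s
    exact_mod_cast h2

lemma P_succ (n : ℕ) : P (n + 1) = ((n + 1 : ℝ)⁻¹) • (X * ∑ k ∈ Finset.range (n + 1),
    s (k + 1) • P (n - k)) := by
  rw [P]; rfl

lemma P_succ' (n : ℕ) : ((n + 1 : ℝ)) • P (n + 1) = X * ∑ k ∈ Finset.range (n + 1),
    s (k + 1) • P (n - k) := by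
  rw [P_succ, smul_smul, mul_inv_cancel₀ (by positivity), one_smul]

lemma eval_P_succ (n : ℕ) (x : ℝ) : ((n : ℝ) + 1) * (P (n+1)).eval x
    = x * ∑ k ∈ Finset.range (n + 1), s (k + 1) * (P (n - k)).eval x := by
  have := congrArg (Polynomial.eval x) (P_succ' n)
  simpa [eval_finset_sum] using this

lemma eval_P_nonneg (n : ℕ) {x : ℝ} (hx : 0 ≤ x) : 0 ≤ (P n).eval x := by
  induction n using Nat.strong_induction_on with
  | _ n ih =>
    match n with
    | 0 => simp [P]
    | n + 1 =>
      have h := eval_P_succ n x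
      have hs : 0 ≤ ∑ k ∈ Finset.range (n + 1), s (k + 1) * (P (n - k)).eval x :=
        Finset.sum_nonneg fun k hk => mul_nonneg (s_nonneg _)
          (ih (n - k) (by omega))
      nlinarith [mul_nonneg hx hs]

lemma eval_P_mono (n : ℕ) {x y : ℝ} (hy : 0 ≤ y) (hxy : y ≤ x) :
    (P n).eval y ≤ (P n).eval x := by
  induction n using Nat.strong_induction_on with
  | _ n ih =>
    match n with
    | 0 => simp [P]
    | n + 1 =>
      have hx : 0 ≤ x := hy.trans hxy
      have h1 := eval_P_succ n x
      have h2 := eval_P_succ n y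
      have hsum : ∑ k ∈ Finset.range (n + 1), s (k + 1) * (P (n - k)).eval y
          ≤ ∑ k ∈ Finset.range (n + 1), s (k + 1) * (P (n - k)).eval x :=
        Finset.sum_le_sum fun k hk => mul_le_mul_of_nonneg_left (ih (n-k) (by omega)) (s_nonneg _)
      have hsy : 0 ≤ ∑ k ∈ Finset.range (n + 1), s (k + 1) * (P (n - k)).eval y :=
        Finset.sum_nonneg fun k hk => mul_nonneg (s_nonneg _) (eval_P_nonneg _ hy)
      have hn1 : (0:ℝ) < (n:ℝ) + 1 := by positivity
      have key : y * ∑ k ∈ Finset.range (n + 1), s (k + 1) * (P (n - k)).eval y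
          ≤ x * ∑ k ∈ Finset.range (n + 1), s (k + 1) * (P (n - k)).eval x :=
        mul_le_mul hxy hsum hsy hx
      nlinarith

noncomputable def Dp (n : ℕ) : Polynomial ℝ :=
  ∑ k ∈ Finset.range n, (s (k + 1) / ((k : ℝ) + 1)) • P (n - 1 - k)

lemma P_smul (j : ℕ) : (j : ℝ) • P j
    = X * ∑ k ∈ Finset.range j, s (k + 1) • P (j - 1 - k) := by
  cases j with
  | zero => simp
  | succ n =>
    have h := P_succ' n
    exact_mod_cast h

lemma tri_ext (n : ℕ) (g : ℕ → ℕ → Polynomial ℝ) (k : ℕ) (hk : k ∈ Finset.range (n + 1)) :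
    ∑ u ∈ Finset.range (n - k), g k u
      = ∑ u ∈ Finset.range (n + 1), if k + u < n then g k u else 0 := by
  have he : Finset.range (n - k) = (Finset.range (n + 1)).filter (fun u => k + u < n) := by
    rw [Finset.mem_range] at hk
    ext u
    simp only [Finset.mem_range, Finset.mem_filter]
    omega
  rw [he, Finset.sum_filter]

lemma tri_swap (n : ℕ) (f : ℕ → ℕ → Polynomial ℝ) :
    ∑ k ∈ Finset.range (n + 1), ∑ u ∈ Finset.range (n - k), f k u
  = ∑ k ∈ Finset.range (n + 1), ∑ u ∈ Finset.range (n - k), f u k := by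
  calc ∑ k ∈ Finset.range (n + 1), ∑ u ∈ Finset.range (n - k), f k u
      = ∑ k ∈ Finset.range (n + 1), ∑ u ∈ Finset.range (n + 1),
          if k + u < n then f k u else 0 := Finset.sum_congr rfl (tri_ext n f)
    _ = ∑ u ∈ Finset.range (n + 1), ∑ k ∈ Finset.range (n + 1),
          if k + u < n then f k u else 0 := Finset.sum_comm
    _ = ∑ k ∈ Finset.range (n + 1), ∑ u ∈ Finset.range (n + 1),
          if k + u < n then f u k else 0 := by
        refine Finset.sum_congr rfl fun k _ => Finset.sum_congr rfl fun u _ => ?_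
        rw [Nat.add_comm]
    _ = ∑ k ∈ Finset.range (n + 1), ∑ u ∈ Finset.range (n - k), f u k := by
        refine Finset.sum_congr rfl fun k hk => ?_
        rw [tri_ext n (fun a b => f b a) k hk]

theorem P_deriv (n : ℕ) : derivative (P n) = Dp n := by
  induction n using Nat.strong_induction_on with
  | _ n ih =>
    match n with
    | 0 => simp [P, Dp]
    | n + 1 =>
      have hne : ((n : ℝ) + 1) ≠ 0 := by positivity
      apply smul_right_injective (Polynomial ℝ) hne
      show ((n : ℝ) + 1) • derivative (P (n + 1)) = ((n : ℝ) + 1) • Dp (n + 1)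
      have L1 : ((n : ℝ) + 1) • derivative (P (n + 1))
          = (∑ k ∈ Finset.range (n + 1), s (k + 1) • P (n - k))
            + X * ∑ k ∈ Finset.range (n + 1), s (k + 1) • Dp (n - k) := by
        rw [← derivative_smul, P_succ' n, derivative_mul, derivative_X, one_mul,
          derivative_sum]
        congr 2
        refine Finset.sum_congr rfl fun k _ => ?_
        rw [derivative_smul, ih (n - k) (by omega)]
      rw [L1]
      -- now the combinatorial claim
      have key : ∀ k ∈ Finset.range (n + 1),
          ((n : ℝ) + 1) • ((s (k + 1) / ((k : ℝ) + 1)) • P (n - k))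
          = s (k + 1) • P (n - k)
            + X * ∑ u ∈ Finset.range (n - k),
                ((s (k + 1) / ((k : ℝ) + 1)) * s (u + 1)) • P (n - (k + u + 1)) := by
        intro k hk
        rw [Finset.mem_range] at hk
        have hcast : (((n - k : ℕ)) : ℝ) = (n : ℝ) - k := by
          rw [Nat.cast_sub (by omega)]
        have hsplit : ((n : ℝ) + 1) * (s (k + 1) / ((k : ℝ) + 1))
            = s (k + 1) + (s (k + 1) / ((k : ℝ) + 1)) * ((n - k : ℕ) : ℝ) := by
          rw [hcast]
          have : ((k : ℝ) + 1) ≠ 0 := by positivity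
          field_simp
          ring
        rw [smul_smul, hsplit, add_smul, ← smul_smul, P_smul (n - k)]
        congr 1
        rw [← mul_smul_comm, Finset.smul_sum]
        congr 1
        refine Finset.sum_congr rfl fun u hu => ?_
        rw [Finset.mem_range] at hu
        rw [smul_smul]
        congr 2
        omega
      have L2 : ((n : ℝ) + 1) • Dp (n + 1)
          = (∑ k ∈ Finset.range (n + 1), s (k + 1) • P (n - k))
            + X * ∑ k ∈ Finset.range (n + 1), ∑ u ∈ Finset.range (n - k),
                ((s (k + 1) / ((k : ℝ) + 1)) * s (u + 1)) • P (n - (k + u + 1)) := by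
        unfold Dp
        have h2 : ∀ k, n + 1 - 1 - k = n - k := fun k => by omega
        simp only [h2]
        have hc : (∑ k ∈ Finset.range (n + 1),
              ((n : ℝ) + 1) • ((s (k + 1) / ((k : ℝ) + 1)) • P (n - k)))
            = ∑ k ∈ Finset.range (n + 1), (s (k + 1) • P (n - k)
              + X * ∑ u ∈ Finset.range (n - k),
                ((s (k + 1) / ((k : ℝ) + 1)) * s (u + 1)) • P (n - (k + u + 1))) :=
          Finset.sum_congr rfl key
        rw [Finset.smul_sum, hc, Finset.sum_add_distrib, ← Finset.mul_sum]
      rw [L2]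
      congr 2
      have hD : ∀ k ∈ Finset.range (n + 1), s (k+1) • Dp (n - k)
          = ∑ u ∈ Finset.range (n - k),
            ((s (u + 1) / ((u : ℝ) + 1)) * s (k + 1)) • P (n - (u + k + 1)) := by
        intro k hk
        unfold Dp
        rw [Finset.smul_sum]
        refine Finset.sum_congr rfl fun u hu => ?_
        rw [Finset.mem_range] at hu
        rw [smul_smul, show n - k - 1 - u = n - (u + k + 1) by omega]
        ring_nf
      have hD' : (∑ k ∈ Finset.range (n + 1), s (k+1) • Dp (n - k))
          = ∑ k ∈ Finset.range (n + 1), ∑ u ∈ Finset.range (n - k),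
            ((s (u + 1) / ((u : ℝ) + 1)) * s (k + 1)) • P (n - (u + k + 1)) :=
        Finset.sum_congr rfl hD
      rw [hD']
      exact (tri_swap n
        (fun k u => ((s (k + 1) / ((k : ℝ) + 1)) * s (u + 1)) • P (n - (k + u + 1)))).symm

lemma eval_P0 (x : ℝ) : (P 0).eval x = 1 := by simp [P]

lemma s_eq {k v : ℕ} (h : (∑ d ∈ k.divisors, d) = v) : s k = v := by unfold s; rw [h]

lemma s_1 : s 1 = 1 := by have := s_eq (k := 1) (v := 1) (by decide); simpa using this

lemma s_2 : s 2 = 3 := by have := s_eq (k := 2) (v := 3) (by decide); simpa using this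

lemma s_3 : s 3 = 4 := by have := s_eq (k := 3) (v := 4) (by decide); simpa using this

lemma s_4 : s 4 = 7 := by have := s_eq (k := 4) (v := 7) (by decide); simpa using this

lemma s_5 : s 5 = 6 := by have := s_eq (k := 5) (v := 6) (by decide); simpa using this

lemma s_6 : s 6 = 12 := by have := s_eq (k := 6) (v := 12) (by decide); simpa using this

lemma s_7 : s 7 = 8 := by have := s_eq (k := 7) (v := 8) (by decide); simpa using this

lemma s_8 : s 8 = 15 := by have := s_eq (k := 8) (v := 15) (by decide); simpa using this

lemma s_9 : s 9 = 13 := by have := s_eq (k := 9) (v := 13) (by decide); simpa using this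

lemma s_10 : s 10 = 18 := by have := s_eq (k := 10) (v := 18) (by decide); simpa using this

lemma s_11 : s 11 = 12 := by have := s_eq (k := 11) (v := 12) (by decide); simpa using this

lemma s_12 : s 12 = 28 := by have := s_eq (k := 12) (v := 28) (by decide); simpa using this

lemma s_13 : s 13 = 14 := by have := s_eq (k := 13) (v := 14) (by decide); simpa using this

lemma s_14 : s 14 = 24 := by have := s_eq (k := 14) (v := 24) (by decide); simpa using this

lemma s_15 : s 15 = 24 := by have := s_eq (k := 15) (v := 24) (by decide); simpa using this

lemma s_16 : s 16 = 31 := by have := s_eq (k := 16) (v := 31) (by decide); simpa using this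

lemma pv_1 : (P 1).eval 1 = 1 := by
  have h := eval_P_succ 0 1
  norm_num [Finset.sum_range_succ, s_1, eval_P0] at h
  linarith

lemma pv_2 : (P 2).eval 1 = 2 := by
  have h := eval_P_succ 1 1
  norm_num [Finset.sum_range_succ, s_1, s_2, pv_1, eval_P0] at h
  linarith

lemma pv_3 : (P 3).eval 1 = 3 := by
  have h := eval_P_succ 2 1
  norm_num [Finset.sum_range_succ, s_1, s_2, s_3, pv_1, pv_2, eval_P0] at h
  linarith

lemma pv_4 : (P 4).eval 1 = 5 := by
  have h := eval_P_succ 3 1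
  norm_num [Finset.sum_range_succ, s_1, s_2, s_3, s_4, pv_1, pv_2, pv_3, eval_P0] at h
  linarith

lemma pv_5 : (P 5).eval 1 = 7 := by
  have h := eval_P_succ 4 1
  norm_num [Finset.sum_range_succ, s_1, s_2, s_3, s_4, s_5, pv_1, pv_2, pv_3, pv_4, eval_P0] at h
  linarith

lemma pv_6 : (P 6).eval 1 = 11 := by
  have h := eval_P_succ 5 1
  norm_num [Finset.sum_range_succ, s_1, s_2, s_3, s_4, s_5, s_6, pv_1, pv_2, pv_3, pv_4, pv_5, eval_P0] at h
  linarith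

lemma pv_7 : (P 7).eval 1 = 15 := by
  have h := eval_P_succ 6 1
  norm_num [Finset.sum_range_succ, s_1, s_2, s_3, s_4, s_5, s_6, s_7, pv_1, pv_2, pv_3, pv_4, pv_5, pv_6, eval_P0] at h
  linarith

lemma pv_8 : (P 8).eval 1 = 22 := by
  have h := eval_P_succ 7 1
  norm_num [Finset.sum_range_succ, s_1, s_2, s_3, s_4, s_5, s_6, s_7, s_8, pv_1, pv_2, pv_3, pv_4, pv_5, pv_6, pv_7, eval_P0] at h
  linarith

lemma pv_9 : (P 9).eval 1 = 30 := by
  have h := eval_P_succ 8 1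
  norm_num [Finset.sum_range_succ, s_1, s_2, s_3, s_4, s_5, s_6, s_7, s_8, s_9, pv_1, pv_2, pv_3, pv_4, pv_5, pv_6, pv_7, pv_8, eval_P0] at h
  linarith

lemma pv_10 : (P 10).eval 1 = 42 := by
  have h := eval_P_succ 9 1
  norm_num [Finset.sum_range_succ, s_1, s_2, s_3, s_4, s_5, s_6, s_7, s_8, s_9, s_10, pv_1, pv_2, pv_3, pv_4, pv_5, pv_6, pv_7, pv_8, pv_9, eval_P0] at h
  linarith

lemma pv_11 : (P 11).eval 1 = 56 := by
  have h := eval_P_succ 10 1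
  norm_num [Finset.sum_range_succ, s_1, s_2, s_3, s_4, s_5, s_6, s_7, s_8, s_9, s_10, s_11, pv_1, pv_2, pv_3, pv_4, pv_5, pv_6, pv_7, pv_8, pv_9, pv_10, eval_P0] at h
  linarith

lemma pv_12 : (P 12).eval 1 = 77 := by
  have h := eval_P_succ 11 1
  norm_num [Finset.sum_range_succ, s_1, s_2, s_3, s_4, s_5, s_6, s_7, s_8, s_9, s_10, s_11, s_12, pv_1, pv_2, pv_3, pv_4, pv_5, pv_6, pv_7, pv_8, pv_9, pv_10, pv_11, eval_P0] at h
  linarith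

lemma pv_13 : (P 13).eval 1 = 101 := by
  have h := eval_P_succ 12 1
  norm_num [Finset.sum_range_succ, s_1, s_2, s_3, s_4, s_5, s_6, s_7, s_8, s_9, s_10, s_11, s_12, s_13, pv_1, pv_2, pv_3, pv_4, pv_5, pv_6, pv_7, pv_8, pv_9, pv_10, pv_11, pv_12, eval_P0] at h
  linarith

lemma pv_14 : (P 14).eval 1 = 135 := by
  have h := eval_P_succ 13 1
  norm_num [Finset.sum_range_succ, s_1, s_2, s_3, s_4, s_5, s_6, s_7, s_8, s_9, s_10, s_11, s_12, s_13, s_14, pv_1, pv_2, pv_3, pv_4, pv_5, pv_6, pv_7, pv_8, pv_9, pv_10, pv_11, pv_12, pv_13, eval_P0] at h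
  linarith

lemma pv_15 : (P 15).eval 1 = 176 := by
  have h := eval_P_succ 14 1
  norm_num [Finset.sum_range_succ, s_1, s_2, s_3, s_4, s_5, s_6, s_7, s_8, s_9, s_10, s_11, s_12, s_13, s_14, s_15, pv_1, pv_2, pv_3, pv_4, pv_5, pv_6, pv_7, pv_8, pv_9, pv_10, pv_11, pv_12, pv_13, pv_14, eval_P0] at h
  linarith

lemma pv_16 : (P 16).eval 1 = 231 := by
  have h := eval_P_succ 15 1
  norm_num [Finset.sum_range_succ, s_1, s_2, s_3, s_4, s_5, s_6, s_7, s_8, s_9, s_10, s_11, s_12, s_13, s_14, s_15, s_16, pv_1, pv_2, pv_3, pv_4, pv_5, pv_6, pv_7, pv_8, pv_9, pv_10, pv_11, pv_12, pv_13, pv_14, pv_15, eval_P0] at h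
  linarith

lemma evP1 (x : ℝ) : (P 1).eval x = x := by
  have h := eval_P_succ 0 x
  norm_num [Finset.sum_range_succ, s_1, eval_P0] at h
  linarith

lemma evP2 (x : ℝ) : (P 2).eval x = (x^2 + 3*x)/2 := by
  have h := eval_P_succ 1 x
  norm_num [Finset.sum_range_succ, s_1, s_2, evP1, eval_P0] at h
  linear_combination h / 2

lemma evP3 (x : ℝ) : (P 3).eval x = (x^3 + 9*x^2 + 8*x)/6 := by
  have h := eval_P_succ 2 x
  norm_num [Finset.sum_range_succ, s_1, s_2, s_3, evP1, evP2, eval_P0] at h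
  linear_combination h / 3

lemma evP4 (x : ℝ) : (P 4).eval x = (x^4 + 18*x^3 + 59*x^2 + 42*x)/24 := by
  have h := eval_P_succ 3 x
  norm_num [Finset.sum_range_succ, s_1, s_2, s_3, s_4, evP1, evP2, evP3, eval_P0] at h
  linear_combination h / 4

lemma sum_id (K : ℕ) : ∑ k ∈ Finset.range K, (k : ℝ) = K * (K - 1) / 2 := by
  induction K with
  | zero => simp
  | succ K ih => rw [Finset.sum_range_succ, ih]; push_cast; ring

lemma sum_sq (K : ℕ) : ∑ k ∈ Finset.range K, (k : ℝ)^2 = K * (K - 1) * (2*K - 1) / 6 := by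
  induction K with
  | zero => simp
  | succ K ih => rw [Finset.sum_range_succ, ih]; push_cast; ring

lemma sum_cube (K : ℕ) : ∑ k ∈ Finset.range K, (k : ℝ)^3 = (K * (K - 1) / 2)^2 := by
  induction K with
  | zero => simp
  | succ K ih => rw [Finset.sum_range_succ, ih]; push_cast; ring

lemma sum_sigma_swap (K : ℕ) : ∑ k ∈ Finset.range K, (∑ d ∈ (k+1).divisors, d)
    = ∑ d ∈ Finset.range K, (d+1) * (K / (d+1)) := by
  induction K with
  | zero => simp
  | succ K ih =>
    rw [Finset.sum_range_succ, ih, Finset.sum_range_succ (fun d => (d+1) * ((K+1)/(d+1)))]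
    have hstep : ∀ d ∈ Finset.range K, (d+1) * ((K+1)/(d+1))
        = (d+1) * (K/(d+1)) + (if (d+1) ∣ (K+1) then (d+1) else 0) := by
      intro d _
      rw [Nat.succ_div, Nat.mul_add]
      split <;> simp
    rw [Finset.sum_congr rfl hstep, Finset.sum_add_distrib]
    have h1 : ∑ d ∈ Finset.range K, (if (d+1) ∣ (K+1) then (d+1) else 0) + (K+1)
        = ∑ e ∈ Finset.Ico 1 (K+2), (if e ∣ (K+1) then e else 0) := by
      rw [Finset.sum_Ico_eq_sum_range]
      have h2 : K + 2 - 1 = K + 1 := rfl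
      rw [h2, Finset.sum_range_succ]
      simp [Nat.add_comm]
    have h2 : ∑ e ∈ Finset.Ico 1 (K+2), (if e ∣ (K+1) then e else 0)
        = ∑ d ∈ (K+1).divisors, d := by
      rw [← Finset.sum_filter]
      rfl
    have h3 : (K+1) * ((K+1)/(K+1)) = K+1 := by
      rw [Nat.div_self (by omega)]; ring
    omega

lemma sum_s_le (K : ℕ) : ∑ k ∈ Finset.range K, s (k+1) ≤ (K:ℝ)^2 := by
  have h1 : ∑ k ∈ Finset.range K, (∑ d ∈ (k+1).divisors, d) ≤ K^2 := by
    rw [sum_sigma_swap]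
    calc ∑ d ∈ Finset.range K, (d+1) * (K / (d+1))
        ≤ ∑ _d ∈ Finset.range K, K :=
          Finset.sum_le_sum fun d _ => by
            simpa [Nat.mul_comm] using Nat.div_mul_le_self K (d+1)
      _ = K * K := by rw [Finset.sum_const, Finset.card_range]; ring
      _ = K^2 := by ring
  have : (∑ k ∈ Finset.range K, s (k+1)) = ((∑ k ∈ Finset.range K, (∑ d ∈ (k+1).divisors, d) : ℕ) : ℝ) := by
    push_cast [s]
    rfl
  rw [this]
  exact_mod_cast h1

lemma rv_le_harm (j : ℕ) (hj : 1 ≤ j) : s j ≤ (j : ℝ) * (harmonic j : ℝ) := by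
  have hswap : (∑ d ∈ j.divisors, (j / d)) = ∑ d ∈ j.divisors, d := Nat.sum_div_divisors j id
  have h1 : s j = ((∑ d ∈ j.divisors, (j / d) : ℕ) : ℝ) := by
    unfold s; rw [hswap]
  rw [h1]
  push_cast
  have h2 : ∑ d ∈ j.divisors, ((j / d : ℕ) : ℝ) ≤ ∑ d ∈ j.divisors, (j : ℝ) * (1 / d) := by
    refine Finset.sum_le_sum fun d hd => ?_
    have := Nat.cast_div_le (m := j) (n := d) (α := ℝ)
    rw [mul_one_div]
    exact this
  refine h2.trans ?_
  rw [← Finset.mul_sum]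
  have h3 : ∑ d ∈ j.divisors, (1 / d : ℝ) ≤ (harmonic j : ℝ) := by
    have hsub : j.divisors ⊆ Finset.Icc 1 j := by
      intro d hd
      rw [Nat.mem_divisors] at hd
      rw [Finset.mem_Icc]
      exact ⟨Nat.one_le_iff_ne_zero.mpr fun h => by simp [h] at hd,
        Nat.le_of_dvd (by omega) hd.1⟩
    have h4 : ∑ d ∈ j.divisors, (1 / d : ℝ) ≤ ∑ d ∈ Finset.Icc 1 j, (1 / d : ℝ) :=
      Finset.sum_le_sum_of_subset_of_nonneg hsub (fun i _ _ => by positivity)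
    refine h4.trans_eq ?_
    rw [harmonic_eq_sum_Icc]
    push_cast
    simp [one_div]
  have hjpos : (0:ℝ) ≤ j := by positivity
  nlinarith [h3]

lemma harm_mono {j a : ℕ} (h : j ≤ a) : (harmonic j : ℝ) ≤ (harmonic a : ℝ) := by
  have : harmonic j ≤ harmonic a := by
    unfold harmonic
    refine Finset.sum_le_sum_of_subset_of_nonneg (by simp [h]) fun i _ _ => by positivity
  exact_mod_cast this

lemma log_le_736 {y : ℝ} (hy : 1 ≤ y) : Real.log y ≤ 0.736 * Real.sqrt y := by
  have hs : 0 < Real.sqrt y := Real.sqrt_pos.mpr (by linarith)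
  have h1 : Real.log y = 2 * Real.log (Real.sqrt y) := by
    rw [Real.log_sqrt (by linarith)]; ring
  have h2 : Real.log (Real.sqrt y) ≤ Real.sqrt y / Real.exp 1 := by
    have h3 := Real.add_one_le_exp (Real.log (Real.sqrt y) - 1)
    rw [Real.exp_sub, Real.exp_log hs] at h3
    linarith
  have he : (2.7182818283 : ℝ) < Real.exp 1 := Real.exp_one_gt_d9
  have h4 : Real.sqrt y / Real.exp 1 ≤ Real.sqrt y / 2.7182818283 := by
    apply div_le_div_of_nonneg_left hs.le (by norm_num) he.le
  have h5 : Real.sqrt y / 2.7182818283 ≤ 0.368 * Real.sqrt y := by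
    rw [div_eq_mul_inv, mul_comm]
    exact mul_le_mul_of_nonneg_right (by norm_num) hs.le
  linarith

lemma evP_rec (m : ℕ) (hm : 1 ≤ m) (x : ℝ) :
    (m:ℝ) * (P m).eval x = x * ∑ k ∈ Finset.range m, s (k+1) * (P (m-1-k)).eval x := by
  obtain ⟨n, rfl⟩ : ∃ n, m = n+1 := ⟨m-1, by omega⟩
  have h := eval_P_succ n x
  push_cast
  exact h

lemma cast_sub_sub {m k : ℕ} (h : k + 1 ≤ m) : ((m-1-k : ℕ):ℝ) = (m:ℝ)-1-k := by
  have h2 : m-1-k = m-(1+k) := by omega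
  rw [h2, Nat.cast_sub (by omega)]
  push_cast
  ring

lemma pv_ge_quad (m : ℕ) : (m:ℝ)^2/2 - 11 ≤ (P m).eval 1 := by
  induction m using Nat.strong_induction_on with
  | _ m ih =>
    rcases le_or_gt m 16 with hm | hm
    · interval_cases m <;>
        norm_num [eval_P0, pv_1, pv_2, pv_3, pv_4, pv_5, pv_6, pv_7, pv_8, pv_9, pv_10,
          pv_11, pv_12, pv_13, pv_14, pv_15, pv_16]
    · have hm1 : 1 ≤ m := by omega
      have h := evP_rec m hm1 1
      rw [one_mul] at h
      have hdrop : ∑ k ∈ Finset.range (m-5), s (k+1) * (P (m-1-k)).eval 1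
          ≤ ∑ k ∈ Finset.range m, s (k+1) * (P (m-1-k)).eval 1 :=
        Finset.sum_le_sum_of_subset_of_nonneg
          (Finset.range_subset_range.mpr (by omega))
          (fun k _ _ => mul_nonneg (s_nonneg _) (eval_P_nonneg _ (by norm_num)))
      have hterm : ∀ k ∈ Finset.range (m-5),
          ((k:ℝ)+1) * (((m:ℝ)-1-k)^2/2 - 11) ≤ s (k+1) * (P (m-1-k)).eval 1 := by
        intro k hk
        rw [Finset.mem_range] at hk
        have hc : ((m-1-k : ℕ):ℝ) = (m:ℝ)-1-k := cast_sub_sub (by omega)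
        have hIH := ih (m-1-k) (by omega)
        rw [hc] at hIH
        have h5 : (5:ℝ) ≤ (m:ℝ)-1-k := by
          have h6 : ((k:ℝ)) ≤ (m:ℝ) - 6 := by
            have : (k:ℝ) + 6 ≤ (m:ℝ) := by exact_mod_cast (by omega : k + 6 ≤ m)
            linarith
          linarith
        have hf : (0:ℝ) ≤ ((m:ℝ)-1-k)^2/2 - 11 := by nlinarith
        have hs : ((k:ℝ)+1) ≤ s (k+1) := by
          have := s_ge (k+1); push_cast at this; linarith
        have hknn : (0:ℝ) ≤ (k:ℝ)+1 := by positivity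
        nlinarith [mul_le_mul hs hIH hf (le_trans hknn hs)]
      have hsum := Finset.sum_le_sum hterm
      set K := m - 5 with hK
      have hmK : m = K + 5 := by omega
      have hcast : (m:ℝ) = (K:ℝ) + 5 := by rw [hmK]; push_cast; ring
      have hexp : ∀ k ∈ Finset.range K, ((k:ℝ)+1) * (((m:ℝ)-1-k)^2/2 - 11)
          = (k:ℝ)^3 * (1/2) + (k:ℝ)^2 * (1/2 - ((K:ℝ)+4))
            + (k:ℝ) * (((K:ℝ)+4)^2/2 - ((K:ℝ)+4) - 11) + (((K:ℝ)+4)^2/2 - 11) := by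
        intro k _
        rw [hcast]
        ring
      rw [Finset.sum_congr rfl hexp, Finset.sum_add_distrib, Finset.sum_add_distrib,
        Finset.sum_add_distrib, ← Finset.sum_mul, ← Finset.sum_mul, ← Finset.sum_mul,
        sum_id, sum_sq, sum_cube, Finset.sum_const, Finset.card_range, nsmul_eq_mul] at hsum
      have hK12 : (12:ℝ) ≤ (K:ℝ) := by exact_mod_cast (by omega : 12 ≤ K)
      have hclosed : ((K:ℝ)+5) * (((K:ℝ)+5)^2/2 - 11)
          ≤ (K * (K - 1) / 2)^2 * (1/2) + (K:ℝ) * (K - 1) * (2*K - 1) / 6 * (1/2 - ((K:ℝ)+4))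
            + (K:ℝ) * (K - 1) / 2 * (((K:ℝ)+4)^2/2 - ((K:ℝ)+4) - 11)
            + (K:ℝ) * (((K:ℝ)+4)^2/2 - 11) := by
        nlinarith [hK12, sq_nonneg ((K:ℝ)-12), sq_nonneg (K:ℝ),
          mul_nonneg (mul_nonneg (sub_nonneg.mpr hK12) (sub_nonneg.mpr hK12)) (sub_nonneg.mpr hK12),
          mul_nonneg (sub_nonneg.mpr hK12) (sq_nonneg ((K:ℝ)-12))]
      have hmpos : (0:ℝ) < (m:ℝ) := by positivity  -- careful m could be 0? m ≥ 17
      have hfinal : ((m:ℝ)) * ((m:ℝ)^2/2 - 11) ≤ (m:ℝ) * (P m).eval 1 := by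
        rw [h, hcast]
        calc ((K:ℝ)+5) * (((K:ℝ)+5)^2/2 - 11) ≤ _ := hclosed
          _ ≤ _ := hsum
          _ ≤ _ := hdrop
      have : (0:ℝ) < (m:ℝ) := by
        have : (17:ℝ) ≤ (m:ℝ) := by exact_mod_cast (by omega : 17 ≤ m)
        linarith
      nlinarith [hfinal, this]

lemma lin_lb (j : ℕ) (hj : 1 ≤ j) {x : ℝ} (hx : 1 ≤ x) :
    (P j).eval 1 * x ≤ (P j).eval x := by
  have h1 := evP_rec j hj x
  have h2 := evP_rec j hj 1
  rw [one_mul] at h2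
  have hS : ∑ k ∈ Finset.range j, s (k+1) * (P (j-1-k)).eval 1
      ≤ ∑ k ∈ Finset.range j, s (k+1) * (P (j-1-k)).eval x :=
    Finset.sum_le_sum fun k _ =>
      mul_le_mul_of_nonneg_left (eval_P_mono _ zero_le_one hx) (s_nonneg _)
  have hjpos : (0:ℝ) < j := by
    have : (1:ℝ) ≤ (j:ℝ) := by exact_mod_cast hj
    linarith
  have hx0 : (0:ℝ) ≤ x := by linarith
  nlinarith [mul_le_mul_of_nonneg_left hS hx0]

lemma quad_lb (j : ℕ) (hj : 2 ≤ j) {x : ℝ} (hx : 1 ≤ x) :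
    ((P j).eval 1 - s j / j) * x^2 ≤ (P j).eval x := by
  obtain ⟨n, rfl⟩ : ∃ n, j = n+1 := ⟨j-1, by omega⟩
  have hj1 : 1 ≤ n + 1 := by omega
  have h1 := evP_rec (n+1) hj1 x
  have h2 := evP_rec (n+1) hj1 1
  rw [one_mul] at h2
  push_cast at h1 h2
  rw [Finset.sum_range_succ] at h1 h2
  rw [show n-n = 0 by omega] at h1 h2
  rw [eval_P0] at h1 h2
  have hterm : ∀ k ∈ Finset.range n,
      s (k+1) * ((P (n-k)).eval 1 * x) ≤ s (k+1) * (P (n-k)).eval x :=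
    fun k hk => mul_le_mul_of_nonneg_left
      (lin_lb _ (by rw [Finset.mem_range] at hk; omega) hx) (s_nonneg _)
  have hS := Finset.sum_le_sum hterm
  have hjpos : (0:ℝ) < ((n:ℝ)+1) := by positivity
  have hx0 : (0:ℝ) ≤ x := by linarith
  -- (n+1) Ex = x * (Sx + s(n+1)) ≥ x * (Σ s pv x + s(n+1)) ≥ x^2 Σ s pv = x^2 ((n+1) pv - s(n+1))
  have e1 : ∑ k ∈ Finset.range n, s (k+1) * ((P (n-k)).eval 1 * x)
      = (∑ k ∈ Finset.range n, s (k+1) * (P (n-k)).eval 1) * x := by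
    rw [Finset.sum_mul]
    exact Finset.sum_congr rfl fun k _ => by ring
  rw [e1] at hS
  have hsnn : 0 ≤ s (n+1) := s_nonneg _
  have key : ((n:ℝ)+1) * (((P (n+1)).eval 1 - s (n+1) / ((n:ℝ)+1)) * x^2)
      ≤ ((n:ℝ)+1) * (P (n+1)).eval x := by
    have expand : ((n:ℝ)+1) * (((P (n+1)).eval 1 - s (n+1) / ((n:ℝ)+1)) * x^2)
        = (((n:ℝ)+1) * (P (n+1)).eval 1 - s (n+1)) * x^2 := by
      field_simp
    rw [expand, h2]
    -- now: (Σ s pv + s(n+1) - s(n+1)) * x^2 ≤ (n+1) Ex = x * (Sx + s(n+1)*1)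
    rw [h1]
    have hxsq : (∑ k ∈ Finset.range n, s (k+1) * (P (n-k)).eval 1) * x * x
        ≤ (∑ k ∈ Finset.range n, s (k+1) * (P (n-k)).eval x) * x := by
      exact mul_le_mul_of_nonneg_right hS hx0
    nlinarith [hxsq, mul_nonneg hsnn hx0]
  have := le_of_mul_le_mul_left key hjpos
  push_cast
  exact this

lemma cubic_lb (m : ℕ) (hm : 3 ≤ m) {x : ℝ} (hx : 1 ≤ x) (H : ℝ) (hH0 : 0 ≤ H)
    (hH : ∀ j, 1 ≤ j → j ≤ m → s j / j ≤ H) :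
    ((P m).eval 1 - 2*H - H*((m:ℝ)-2)^2/m) * x^3 ≤ (P m).eval x := by
  have hm1 : 1 ≤ m := by omega
  have h1 := evP_rec m hm1 x
  have h2 := evP_rec m hm1 1
  rw [one_mul] at h2
  have peel : ∀ g : ℕ → ℝ, ∑ k ∈ Finset.range m, g k
      = (∑ k ∈ Finset.range (m-2), g k) + g (m-2) + g (m-1) := by
    intro g
    obtain ⟨n, rfl⟩ : ∃ n, m = n+2 := ⟨m-2, by omega⟩
    rw [show n+2-2 = n by omega, show n+2-1 = n+1 by omega,
      Finset.sum_range_succ, Finset.sum_range_succ]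
  rw [peel] at h1 h2
  rw [show m-1-(m-2) = 1 by omega, show m-1-(m-1) = 0 by omega, eval_P0] at h1 h2
  rw [evP1, show (m-2)+1 = m-1 by omega, show (m-1)+1 = m by omega] at h1 h2
  -- quadratic bounds for inner terms
  have hterm : ∀ k ∈ Finset.range (m-2),
      s (k+1) * (((P (m-1-k)).eval 1 - s (m-1-k) / (m-1-k : ℕ)) * x^2)
        ≤ s (k+1) * (P (m-1-k)).eval x := by
    intro k hk
    rw [Finset.mem_range] at hk
    exact mul_le_mul_of_nonneg_left (quad_lb (m-1-k) (by omega) hx) (s_nonneg _)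
  have hS := Finset.sum_le_sum hterm
  have hxpos : (0:ℝ) < x := by linarith
  have hmpos : (0:ℝ) < (m:ℝ) := by
    have : (1:ℝ) ≤ (m:ℝ) := by exact_mod_cast hm1
    linarith
  have h3m : (3:ℝ) ≤ (m:ℝ) := by exact_mod_cast hm
  -- junk bound
  have hjunk : ∑ k ∈ Finset.range (m-2), s (k+1) * (s (m-1-k) / ((m-1-k : ℕ):ℝ))
      ≤ H * ((m:ℝ)-2)^2 := by
    calc ∑ k ∈ Finset.range (m-2), s (k+1) * (s (m-1-k) / ((m-1-k : ℕ):ℝ))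
        ≤ ∑ k ∈ Finset.range (m-2), s (k+1) * H := by
          refine Finset.sum_le_sum fun k hk => ?_
          rw [Finset.mem_range] at hk
          exact mul_le_mul_of_nonneg_left (hH (m-1-k) (by omega) (by omega)) (s_nonneg _)
      _ = (∑ k ∈ Finset.range (m-2), s (k+1)) * H := by rw [Finset.sum_mul]
      _ ≤ ((m-2 : ℕ):ℝ)^2 * H := mul_le_mul_of_nonneg_right (sum_s_le _) hH0
      _ = H * ((m:ℝ)-2)^2 := by
          rw [Nat.cast_sub (by omega)]
          push_cast
          ring
  -- s bounds
  have hsm1 : s (m-1) ≤ (m:ℝ) * H := by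
    have := hH (m-1) (by omega) (by omega)
    have hc : ((m-1:ℕ):ℝ) = (m:ℝ)-1 := by rw [Nat.cast_sub (by omega)]; push_cast; ring
    have hpos : (0:ℝ) < ((m-1:ℕ):ℝ) := by rw [hc]; linarith
    rw [div_le_iff₀ hpos] at this
    rw [hc] at this
    nlinarith [this, hH0]
  have hsm : s m ≤ (m:ℝ) * H := by
    have := hH m hm1 le_rfl
    rw [div_le_iff₀ hmpos] at this
    linarith [this]
  -- combine: m Ex ≥ x * (Σ_{m-2} s Exj + nonneg) ≥ x * Σ s (pv - rv) x² = x³ (Σ s pv - Σ s rv)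
  have step1 : x * ((∑ k ∈ Finset.range (m-2), s (k+1) * (P (m-1-k)).eval x))
      ≤ (m:ℝ) * (P m).eval x := by
    rw [h1]
    have t1 : 0 ≤ s (m-1) * x := mul_nonneg (s_nonneg _) hxpos.le
    have t2 : 0 ≤ s m * 1 := by simpa using s_nonneg m
    nlinarith [t1, t2, hxpos]
  have step2 : x * (∑ k ∈ Finset.range (m-2),
        s (k+1) * (((P (m-1-k)).eval 1 - s (m-1-k) / ((m-1-k:ℕ):ℝ)) * x^2))
      ≤ x * ((∑ k ∈ Finset.range (m-2), s (k+1) * (P (m-1-k)).eval x)) :=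
    mul_le_mul_of_nonneg_left hS hxpos.le
  have e2 : ∑ k ∈ Finset.range (m-2),
        s (k+1) * (((P (m-1-k)).eval 1 - s (m-1-k) / ((m-1-k:ℕ):ℝ)) * x^2)
      = ((∑ k ∈ Finset.range (m-2), s (k+1) * (P (m-1-k)).eval 1)
        - (∑ k ∈ Finset.range (m-2), s (k+1) * (s (m-1-k) / ((m-1-k:ℕ):ℝ)))) * x^2 := by
    rw [sub_mul, Finset.sum_mul, Finset.sum_mul, ← Finset.sum_sub_distrib]
    exact Finset.sum_congr rfl fun k _ => by ring
  have hx3 : (0:ℝ) ≤ x^3 := by positivity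
  have hA : (∑ k ∈ Finset.range (m-2), s (k+1) * (P (m-1-k)).eval 1)
      = (m:ℝ) * (P m).eval 1 - s (m-1) - s m := by linarith [h2]
  have big : ((m:ℝ) * (P m).eval 1 - s (m-1) - s m - H*((m:ℝ)-2)^2) * x^3
      ≤ (m:ℝ) * (P m).eval x := by
    calc ((m:ℝ) * (P m).eval 1 - s (m-1) - s m - H*((m:ℝ)-2)^2) * x^3
        ≤ ((∑ k ∈ Finset.range (m-2), s (k+1) * (P (m-1-k)).eval 1)
          - (∑ k ∈ Finset.range (m-2), s (k+1) * (s (m-1-k) / ((m-1-k:ℕ):ℝ)))) * x^3 := by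
          apply mul_le_mul_of_nonneg_right _ hx3
          linarith [hjunk, hA]
      _ = x * (((∑ k ∈ Finset.range (m-2), s (k+1) * (P (m-1-k)).eval 1)
          - (∑ k ∈ Finset.range (m-2), s (k+1) * (s (m-1-k) / ((m-1-k:ℕ):ℝ)))) * x^2) := by
          ring
      _ = x * (∑ k ∈ Finset.range (m-2),
          s (k+1) * (((P (m-1-k)).eval 1 - s (m-1-k) / ((m-1-k:ℕ):ℝ)) * x^2)) := by
          rw [e2]
      _ ≤ x * ((∑ k ∈ Finset.range (m-2), s (k+1) * (P (m-1-k)).eval x)) := step2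
      _ ≤ (m:ℝ) * (P m).eval x := step1
  have hfs : (m:ℝ) * (H*((m:ℝ)-2)^2/m) = H*((m:ℝ)-2)^2 := by field_simp
  have final2 : (m:ℝ) * ((((P m).eval 1 - 2*H - H*((m:ℝ)-2)^2/m)) * x^3)
      ≤ (m:ℝ) * (P m).eval x := by
    calc (m:ℝ) * ((((P m).eval 1 - 2*H - H*((m:ℝ)-2)^2/m)) * x^3)
        = ((m:ℝ) * (P m).eval 1 - 2*H*m - (m:ℝ) * (H*((m:ℝ)-2)^2/m)) * x^3 := by ring
      _ = ((m:ℝ) * (P m).eval 1 - 2*H*m - H*((m:ℝ)-2)^2) * x^3 := by rw [hfs]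
      _ ≤ ((m:ℝ) * (P m).eval 1 - s (m-1) - s m - H*((m:ℝ)-2)^2) * x^3 := by
          apply mul_le_mul_of_nonneg_right _ hx3
          nlinarith [hsm1, hsm]
      _ ≤ (m:ℝ) * (P m).eval x := big
  exact le_of_mul_le_mul_left final2 hmpos

lemma eval_Dp (n : ℕ) (x : ℝ) : (Dp n).eval x
    = ∑ k ∈ Finset.range n, (s (k+1)/((k:ℝ)+1)) * (P (n-1-k)).eval x := by
  unfold Dp
  rw [eval_finset_sum]
  exact Finset.sum_congr rfl fun k _ => by simp

lemma eval_deriv_F (b : ℕ) (hb : 14 ≤ b) (F : ℕ → Polynomial ℝ)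
    (hF : ∀ m, F m = Polynomial.C ((1 : ℝ) / 12) * (3 * Polynomial.X + 17) * P (m - 1) - P m)
    (x : ℝ) :
    (derivative (F (b+1))).eval x
      = (1/4) * (P b).eval x
        + (∑ k ∈ Finset.range b, (s (k+1)/((k:ℝ)+1)) * (F (b-k)).eval x)
        - s (b+1) / ((b:ℝ)+1) := by
  have hd : derivative (F (b+1))
      = C ((1:ℝ)/12) * 3 * P b + C ((1:ℝ)/12) * (3*X+17) * Dp b - Dp (b+1) := by
    rw [hF (b+1)]
    rw [show b+1-1 = b by omega]
    rw [derivative_sub, derivative_mul, derivative_mul, derivative_C, P_deriv b,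
      P_deriv (b+1)]
    have h3 : derivative (3*X + 17 : Polynomial ℝ) = 3 := by
      rw [derivative_add, derivative_mul]
      simp
    rw [h3]
    ring
  rw [hd]
  rw [eval_sub, eval_add, eval_mul, eval_mul, eval_mul, eval_mul, eval_C, eval_add,
    eval_mul, eval_X, eval_Dp, eval_Dp]
  rw [Finset.sum_range_succ]
  rw [show b+1-1-b = 0 by omega, eval_P0]
  have he17 : ((17 : Polynomial ℝ)).eval x = 17 := by norm_num
  have he3 : ((3 : Polynomial ℝ)).eval x = 3 := by norm_num
  rw [he17, he3]
  have hsum : (1:ℝ)/12 * (3*x+17) * (∑ k ∈ Finset.range b, (s (k+1)/((k:ℝ)+1)) * (P (b-1-k)).eval x)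
      - (∑ k ∈ Finset.range b, (s (k+1)/((k:ℝ)+1)) * (P (b+1-1-k)).eval x)
      = ∑ k ∈ Finset.range b, (s (k+1)/((k:ℝ)+1)) * (F (b-k)).eval x := by
    rw [Finset.mul_sum, ← Finset.sum_sub_distrib]
    refine Finset.sum_congr rfl fun k hk => ?_
    rw [Finset.mem_range] at hk
    rw [hF (b-k)]
    rw [show b-k-1 = b-1-k by omega, show b+1-1-k = b-k by omega]
    rw [eval_sub, eval_mul, eval_mul, eval_C, eval_add, eval_mul, eval_X, he17, he3]
    ring
  rw [← hsum]
  ring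

lemma evF1 (F : ℕ → Polynomial ℝ)
    (hF : ∀ m, F m = Polynomial.C ((1 : ℝ) / 12) * (3 * Polynomial.X + 17) * P (m - 1) - P m)
    (x : ℝ) : (F 1).eval x = (17 - 9*x)/12 := by
  rw [hF 1]
  norm_num [eval_P0, evP1]
  ring

lemma evF2 (F : ℕ → Polynomial ℝ)
    (hF : ∀ m, F m = Polynomial.C ((1 : ℝ) / 12) * (3 * Polynomial.X + 17) * P (m - 1) - P m)
    (x : ℝ) : (F 2).eval x = -(3*x^2+x)/12 := by
  rw [hF 2]
  norm_num [evP1, evP2]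
  ring

lemma evF3 (F : ℕ → Polynomial ℝ)
    (hF : ∀ m, F m = Polynomial.C ((1 : ℝ) / 12) * (3 * Polynomial.X + 17) * P (m - 1) - P m)
    (x : ℝ) : (F 3).eval x = (-x^3 - 10*x^2 + 19*x)/24 := by
  rw [hF 3]
  norm_num [evP2, evP3]
  ring

lemma evF4 (F : ℕ → Polynomial ℝ)
    (hF : ∀ m, F m = Polynomial.C ((1 : ℝ) / 12) * (3 * Polynomial.X + 17) * P (m - 1) - P m)
    (x : ℝ) : (F 4).eval x = (5*x - 5*x^3)/36 := by
  rw [hF 4]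
  norm_num [evP3, evP4]
  ring

lemma neg_term_lb {L Hh v u : ℝ} (hL0 : 0 ≤ L) (hLH : L ≤ Hh) (hu0 : 0 ≤ u)
    (huv : -u ≤ v) : -(Hh*u) ≤ L*v := by
  rcases le_or_gt 0 v with h | h
  · nlinarith
  · nlinarith

lemma numeric_key (m : ℕ) (hm : 14 ≤ m) :
    (1 + 0.736*Real.sqrt ((m:ℝ)+1)) * ((m:ℝ) + 13/3) < (m:ℝ)^2/2 - 11 := by
  set q := Real.sqrt ((m:ℝ)+1) with hq
  have hm0 : (0:ℝ) ≤ (m:ℝ)+1 := by positivity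
  have hq2 : q^2 = (m:ℝ)+1 := Real.sq_sqrt hm0
  have hq15 : Real.sqrt 15 ≤ q := by
    apply Real.sqrt_le_sqrt
    have : (14:ℝ) ≤ (m:ℝ) := by exact_mod_cast hm
    linarith
  have hq387 : (3.872:ℝ) ≤ q := by
    refine le_trans ?_ hq15
    rw [show (15:ℝ) = 15 by norm_num]
    have : (3.872:ℝ) = Real.sqrt (3.872^2) := by
      rw [Real.sqrt_sq (by norm_num)]
    rw [this]
    apply Real.sqrt_le_sqrt
    norm_num
  have hmq : (m:ℝ) = q^2 - 1 := by linarith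
  rw [hmq]
  nlinarith [hq387, sq_nonneg (q - 3.872), mul_nonneg (sub_nonneg.mpr hq387) (sq_nonneg (q-3.872)),
    mul_nonneg (mul_nonneg (sub_nonneg.mpr hq387) (sub_nonneg.mpr hq387)) (sub_nonneg.mpr hq387),
    sq_nonneg q, mul_nonneg (sub_nonneg.mpr hq387) (sq_nonneg q)]

lemma bnd4 {Hh L x : ℝ} (hx : 1 ≤ x) (hL0 : 0 ≤ L) (hLH : L ≤ Hh)
    (e1 : (0:ℝ) ≤ x*(x-1)*(x+1)) :
    -(Hh * ((5*x^3-5*x)/36)) ≤ L * ((5*x - 5*x^3)/36) :=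
  neg_term_lb hL0 hLH (by nlinarith [e1]) (by nlinarith [e1])

lemma bnd3 {Hh L x : ℝ} (hx : 1 ≤ x) (hL0 : 0 ≤ L) (hLH : L ≤ Hh)
    (e3 : (0:ℝ) ≤ x*(x-1)*(x+11)) :
    -(Hh * ((x^3+10*x^2-11*x)/24)) ≤ L * ((-x^3 - 10*x^2 + 19*x)/24) :=
  neg_term_lb hL0 hLH (by nlinarith [e3]) (by nlinarith [e3])

lemma bnd2 {Hh L x : ℝ} (hx : 1 ≤ x) (hL0 : 0 ≤ L) (hLH : L ≤ Hh) :
    -(Hh * ((3*x^2+x)/12)) ≤ L * (-(3*x^2+x)/12) :=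
  neg_term_lb hL0 hLH (by nlinarith [sq_nonneg x]) (by linarith)

lemma bnd1 {Hh L x : ℝ} (hx : 1 ≤ x) (hL0 : 0 ≤ L) (hLH : L ≤ Hh) :
    -(Hh * ((9*x-9)/12)) ≤ L * ((17 - 9*x)/12) :=
  neg_term_lb hL0 hLH (by linarith) (by linarith)

lemma hpoly_lem {x : ℝ} (hx : 1 ≤ x) :
    (5*x^3-5*x)/36 + (x^3+10*x^2-11*x)/24 + (3*x^2+x)/12 + (9*x-9)/12 + 1 ≤ (4/3)*x^3 := by
  nlinarith [hx, sq_nonneg x, mul_nonneg (sub_nonneg.mpr hx) (sq_nonneg x),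
    mul_nonneg (mul_nonneg (sub_nonneg.mpr hx) (sub_nonneg.mpr hx)) (sub_nonneg.mpr hx)]

lemma junk_lem {Hh x : ℝ} (hH0 : 0 ≤ Hh) (hx : 1 ≤ x) :
    Hh*((5*x^3-5*x)/36) + Hh*((x^3+10*x^2-11*x)/24) + Hh*((3*x^2+x)/12)
      + Hh*((9*x-9)/12) + Hh ≤ (4/3)*(Hh*x^3) := by
  nlinarith [mul_le_mul_of_nonneg_left (hpoly_lem hx) hH0]

theorem stmt15 (a : ℕ) (ha : 15 ≤ a) (F : ℕ → Polynomial ℝ)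
    (hF : ∀ m, F m = Polynomial.C ((1 : ℝ) / 12) * (3 * Polynomial.X + 17) * P (m - 1) - P m)
    (hyp : ∀ m, 5 ≤ m → m < a → ∀ x : ℝ, 1 < x → 0 < (F m).eval x) :
    ∀ x : ℝ, 1 < x → 0 < (Polynomial.derivative (F a)).eval x := by
  intro x hx
  have hx1 : (1:ℝ) ≤ x := hx.le
  obtain ⟨c, rfl⟩ : ∃ c, a = c + 15 := ⟨a - 15, by omega⟩
  -- the bound H
  set Ha : ℝ := 1 + Real.log ((c:ℝ)+15) with hHadef
  have hc15 : (1:ℝ) ≤ (c:ℝ)+15 := by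
    have : (0:ℝ) ≤ (c:ℝ) := Nat.cast_nonneg c
    linarith
  have hHa0 : 0 ≤ Ha := by
    have := Real.log_nonneg hc15
    rw [hHadef]; linarith
  have hrv : ∀ j, 1 ≤ j → j ≤ c+15 → s j / (j:ℝ) ≤ Ha := by
    intro j h1 h2
    have h3 := rv_le_harm j h1
    have hjpos : (0:ℝ) < (j:ℝ) := by
      have : (1:ℝ) ≤ (j:ℝ) := by exact_mod_cast h1
      linarith
    have h4 : s j / (j:ℝ) ≤ (harmonic j : ℝ) := by
      rw [div_le_iff₀ hjpos]; nlinarith [h3]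
    have h5 : (harmonic j : ℝ) ≤ (harmonic (c+15) : ℝ) := harm_mono h2
    have h6 := harmonic_le_one_add_log (c+15)
    push_cast at h6
    rw [hHadef]
    linarith
  -- cubic lower bound at b = c + 14
  have hcub := cubic_lb (c+14) (by omega) hx1 Ha hHa0
    (fun j h1 h2 => hrv j h1 (by omega))
  have hquad := pv_ge_quad (c+14)
  have hkey := numeric_key (c+14) (by omega)
  have hlog : Real.log ((c:ℝ)+15) ≤ 0.736 * Real.sqrt ((c:ℝ)+15) := log_le_736 hc15
  push_cast at hcub hquad hkey
  have hsq_eq : ((c:ℝ) + 14 + 1) = (c:ℝ) + 15 := by ring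
  rw [hsq_eq] at hkey
  -- numeric conclusion : (16/3) * Ha < t
  set t : ℝ := (P (c+14)).eval 1 - 2*Ha - Ha*(((c:ℝ)+14)-2)^2/((c:ℝ)+14) with htdef
  have hmr0 : (0:ℝ) < (c:ℝ)+14 := by positivity
  have hdiv : (((c:ℝ)+14)-2)^2/((c:ℝ)+14) ≤ ((c:ℝ)+14) - 3 := by
    rw [div_le_iff₀ hmr0]; nlinarith
  have hHaHb : Ha ≤ 1 + 0.736 * Real.sqrt ((c:ℝ)+15) := by rw [hHadef]; linarith
  have hkey2 : Ha * (((c:ℝ)+14) + 13/3) < ((c:ℝ)+14)^2/2 - 11 := by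
    have hnn : (0:ℝ) ≤ ((c:ℝ)+14) + 13/3 := by positivity
    nlinarith [hkey, hHaHb, hnn]
  have hstep1 : Ha * (((((c:ℝ)+14)-2)^2)/((c:ℝ)+14)) ≤ Ha * (((c:ℝ)+14) - 3) :=
    mul_le_mul_of_nonneg_left hdiv hHa0
  have hstep2 : Ha * (((c:ℝ)+14)-2)^2/((c:ℝ)+14) = Ha * (((((c:ℝ)+14)-2)^2)/((c:ℝ)+14)) := by
    ring
  have hstep3 : Ha * (((c:ℝ)+14) - 3) = Ha*((c:ℝ)+14) - 3*Ha := by ring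
  have hkey3 : Ha*((c:ℝ)+14) + (13/3)*Ha < ((c:ℝ)+14)^2/2 - 11 := by
    have : Ha * (((c:ℝ)+14) + 13/3) = Ha*((c:ℝ)+14) + (13/3)*Ha := by ring
    linarith [hkey2, this.symm.le, this.le]
  have hT : (16/3) * Ha < t := by
    rw [htdef, hstep2]
    linarith [hquad, hkey3, hstep1, hstep3]
  -- decomposition of the derivative
  have hDF := eval_deriv_F (c+14) (by omega) F hF x
  rw [show c+15 = (c+14)+1 by omega]
  rw [hDF]
  -- peel off the last four terms of the sum
  have hpeel : ∀ g : ℕ → ℝ, ∑ k ∈ Finset.range (c+14), g k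
      = (∑ k ∈ Finset.range (c+10), g k) + g (c+10) + g (c+11) + g (c+12) + g (c+13) := by
    intro g
    rw [show c+14 = (c+13)+1 by omega, Finset.sum_range_succ,
      show c+13 = (c+12)+1 by omega, Finset.sum_range_succ,
      show c+12 = (c+11)+1 by omega, Finset.sum_range_succ,
      show c+11 = (c+10)+1 by omega, Finset.sum_range_succ]
    all_goals simp only [Nat.add_assoc]
    all_goals norm_num
  rw [hpeel (fun k => (s (k+1)/((k:ℝ)+1)) * (F (c+14-k)).eval x)]
  rw [show c+14-(c+10) = 4 by omega, show c+14-(c+11) = 3 by omega,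
    show c+14-(c+12) = 2 by omega, show c+14-(c+13) = 1 by omega,
    evF1 F hF x, evF2 F hF x, evF3 F hF x, evF4 F hF x]
  -- the main sum is nonnegative
  have hS0 : 0 ≤ ∑ k ∈ Finset.range (c+10), (s (k+1)/((k:ℝ)+1)) * (F (c+14-k)).eval x := by
    refine Finset.sum_nonneg fun k hk => ?_
    rw [Finset.mem_range] at hk
    have h1 : 0 ≤ s (k+1)/((k:ℝ)+1) := div_nonneg (s_nonneg _) (by positivity)
    have h2 : 0 < (F (c+14-k)).eval x := hyp (c+14-k) (by omega) (by omega) x hx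
    positivity
  -- bounds on the coefficients L
  have hLb : ∀ k : ℕ, k + 1 ≤ c+15 → s (k+1)/((k:ℝ)+1) ≤ Ha := by
    intro k hk
    have := hrv (k+1) (by omega) hk
    push_cast at this
    exact this
  have hL0 : ∀ k : ℕ, (0:ℝ) ≤ s (k+1)/((k:ℝ)+1) :=
    fun k => div_nonneg (s_nonneg _) (by positivity)
  -- last coefficient
  have hlast : s ((c+14)+1) / (((c+14:ℕ):ℝ)+1) ≤ Ha := by
    rw [show (c+14)+1 = c+15 from by omega]
    have h0 := hrv (c+15) (by omega) le_rfl
    have hc : ((c+15:ℕ):ℝ) = ((c+14:ℕ):ℝ)+1 := by push_cast; ring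
    rw [hc] at h0
    exact h0
  -- auxiliary sign facts
  have hx0 : (0:ℝ) ≤ x := by linarith
  have e1 : (0:ℝ) ≤ x*(x-1)*(x+1) :=
    mul_nonneg (mul_nonneg hx0 (by linarith)) (by linarith)
  have e3 : (0:ℝ) ≤ x*(x-1)*(x+11) :=
    mul_nonneg (mul_nonneg hx0 (by linarith)) (by linarith)
  -- four negative-term bounds
  have hT4 : -(Ha * ((5*x^3-5*x)/36)) ≤ (s ((c+10)+1)/(((c+10:ℕ):ℝ)+1)) * ((5*x - 5*x^3)/36) := by
    exact bnd4 hx1 (hL0 (c+10)) (hLb (c+10) (by omega)) e1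
  have hT3 : -(Ha * ((x^3+10*x^2-11*x)/24)) ≤ (s ((c+11)+1)/(((c+11:ℕ):ℝ)+1)) * ((-x^3 - 10*x^2 + 19*x)/24) := by
    exact bnd3 hx1 (hL0 (c+11)) (hLb (c+11) (by omega)) e3
  have hT2 : -(Ha * ((3*x^2+x)/12)) ≤ (s ((c+12)+1)/(((c+12:ℕ):ℝ)+1)) * (-(3*x^2+x)/12) := by
    exact bnd2 hx1 (hL0 (c+12)) (hLb (c+12) (by omega))
  have hT1 : -(Ha * ((9*x-9)/12)) ≤ (s ((c+13)+1)/(((c+13:ℕ):ℝ)+1)) * ((17 - 9*x)/12) := by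
    exact bnd1 hx1 (hL0 (c+13)) (hLb (c+13) (by omega))
  -- junk polynomial bound
  have hx3 : (0:ℝ) < x^3 := by positivity
  have hjunkineq := junk_lem hHa0 hx1
  have hmain2 : (16/3)*(Ha*x^3) < t*x^3 := by
    have h := mul_lt_mul_of_pos_right hT hx3
    calc (16/3)*(Ha*x^3) = (16/3)*Ha*x^3 := by ring
      _ < t*x^3 := h
  clear_value t Ha
  linarith only [hS0, hT4, hT3, hT2, hT1, hmain2, hcub, hlast, hjunkineq]
end

section
/- For every n ≥ 1 and every real x > 0 one has P_n(x) ≥ ∑_{k=1}^n binom(n−1, k−1)·x^k/k!; equivalently, writing P_n(x) = ∑_{m=1}^n A_{n,m}·x^m, each coefficient satisfies A_{n,m} ≥ (1/m!)·binom(n−1, m−1). -/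
/-!
The lower bound `Λ_n(x) = ∑_{k=1}^n binom(n-1,k-1) x^k / k!` has generating function
`∑ Λ_n q^n = exp (x q / (1 - q))`, so taking the logarithmic derivative shows that `Λ_n` satisfies
the recurrence of `P_n` with `σ(k)` replaced by `k`: `n Λ_n = x ∑_{k=1}^n k Λ_{n-k}`.
Since `k ≤ σ(k)` and every coefficient of `Λ_n` is nonnegative, induction on `n` gives
`coeff Λ_n ≤ coeff P_n` coefficientwise, which yields both claims (the coefficients of `P_n` are
then nonnegative as well, so the inequality survives evaluation at `x > 0`).
-/

open Polynomial Finset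

theorem Nat.le_sum_divisors (n : ℕ) : n ≤ ∑ d ∈ n.divisors, d := by
  rw [Nat.sum_divisors_eq_sum_properDivisors_add_self]
  exact Nat.le_add_left n _

/-- Upper Chu–Vandermonde identity. -/
theorem Nat.sum_antidiagonal_choose_mul_choose (N a b : ℕ) :
    ∑ p ∈ antidiagonal N, p.1.choose a * p.2.choose b = (N + 1).choose (a + b + 1) := by
  induction N generalizing b with
  | zero => cases b <;> simp [Nat.choose_succ_succ, ← add_assoc]
  | succ N ih =>
    rw [Nat.sum_antidiagonal_succ']
    cases b with
    | zero =>
      have h := ih 0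
      simp only [Nat.choose_zero_right, mul_one, add_zero] at h ⊢
      rw [h]
      exact (Nat.choose_succ_succ (N + 1) a).symm
    | succ b =>
      simp only [Nat.choose_succ_succ _ b, mul_add, sum_add_distrib, ih, Nat.choose_zero_succ,
        mul_zero, zero_add]
      rw [show a + (b + 1) + 1 = a + b + 1 + 1 by ring, Nat.choose_succ_succ (N + 1)]

theorem Nat.sum_antidiagonal_add_one_mul_choose (N b : ℕ) :
    ∑ p ∈ antidiagonal N, (p.1 + 1) * p.2.choose b = (N + 2).choose (b + 2) := by
  have h := Nat.sum_antidiagonal_choose_mul_choose (N + 1) 1 b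
  rw [Nat.sum_antidiagonal_succ] at h
  simpa [add_comm 1 b] using h

theorem P_zero : P 0 = 1 := by
  rw [P]

theorem coeff_P_succ_zero (n : ℕ) : (P (n + 1)).coeff 0 = 0 := by
  rw [P, coeff_smul, mul_coeff_zero, coeff_X_zero, zero_mul, smul_zero]

theorem add_one_mul_coeff_P_succ (n m : ℕ) :
    (n + 1 : ℝ) * (P (n + 1)).coeff (m + 1) =
      ∑ p ∈ antidiagonal n, ((∑ d ∈ (p.1 + 1).divisors, d : ℕ) : ℝ) * (P p.2).coeff m := by
  rw [P, coeff_smul, coeff_X_mul, finsetSum_coeff, smul_eq_mul, ← mul_assoc,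
    mul_inv_cancel₀ (by positivity), one_mul,
    Nat.sum_antidiagonal_eq_sum_range_succ (fun i j => ((∑ d ∈ (i + 1).divisors, d : ℕ) : ℝ) *
      (P j).coeff m)]
  simp only [coeff_smul, smul_eq_mul]

/-- `laguerreCoeff n m` is the coefficient of `x ^ m` in `Λ_n(x) = (x / n) L_{n-1}^{(1)}(-x)`,
with `Λ_0 = 1`. -/
noncomputable def laguerreCoeff : ℕ → ℕ → ℝ
  | 0, m => if m = 0 then 1 else 0
  | _ + 1, 0 => 0
  | n + 1, m + 1 => n.choose m / (m + 1).factorial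

theorem laguerreCoeff_nonneg (n m : ℕ) : 0 ≤ laguerreCoeff n m := by
  rcases n with _ | n <;> rcases m with _ | m <;> simp only [laguerreCoeff] <;> positivity

theorem add_one_mul_laguerreCoeff_succ (n m : ℕ) :
    (n + 1 : ℝ) * laguerreCoeff (n + 1) (m + 1) =
      ∑ p ∈ antidiagonal n, ((p.1 : ℝ) + 1) * laguerreCoeff p.2 m := by
  rcases n with _ | n
  · rcases m with _ | m <;> simp [laguerreCoeff]
  rw [Nat.sum_antidiagonal_succ']
  rcases m with _ | m
  · simp [laguerreCoeff]
  have hsum : ∑ p ∈ antidiagonal n, ((p.1 : ℝ) + 1) * ((p.2.choose m : ℝ) / (m + 1).factorial)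
      = ((n + 2).choose (m + 2) : ℝ) / (m + 1).factorial := by
    rw [← Nat.sum_antidiagonal_add_one_mul_choose, Nat.cast_sum, sum_div]
    refine sum_congr rfl fun p _ => ?_
    push_cast
    ring
  have hchoose : ((n + 2 : ℕ) : ℝ) * (n + 1).choose (m + 1) = (n + 2).choose (m + 2) * (m + 2) := by
    exact_mod_cast Nat.add_one_mul_choose_eq (n + 1) (m + 1)
  simp only [laguerreCoeff, Nat.add_eq_zero_iff, one_ne_zero, and_false, if_false, mul_zero,
    zero_add, hsum, Nat.factorial_succ (m + 1)]
  push_cast at hchoose ⊢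
  field_simp
  linear_combination hchoose

theorem laguerreCoeff_le_coeff_P (n m : ℕ) : laguerreCoeff n m ≤ (P n).coeff m := by
  induction n using Nat.strong_induction_on generalizing m with
  | _ n ih =>
    rcases n with _ | n
    · simp [laguerreCoeff, P_zero, coeff_one]
    rcases m with _ | m
    · simp [laguerreCoeff, coeff_P_succ_zero]
    refine le_of_mul_le_mul_left ?_ (by positivity : (0 : ℝ) < n + 1)
    rw [add_one_mul_laguerreCoeff_succ, add_one_mul_coeff_P_succ]
    refine sum_le_sum fun p hp => mul_le_mul ?_ (ih p.2 (Nat.antidiagonal.snd_lt hp) m)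
      (laguerreCoeff_nonneg _ _) (by positivity)
    exact_mod_cast Nat.le_sum_divisors (p.1 + 1)

theorem coeff_P_nonneg (n m : ℕ) : 0 ≤ (P n).coeff m :=
  (laguerreCoeff_nonneg n m).trans (laguerreCoeff_le_coeff_P n m)

theorem choose_div_factorial_le_coeff_P {n k : ℕ} (hk : 1 ≤ k) (hkn : k ≤ n) :
    ((n - 1).choose (k - 1) : ℝ) / k.factorial ≤ (P n).coeff k := by
  obtain ⟨n, rfl⟩ : ∃ n', n = n' + 1 := ⟨n - 1, by omega⟩
  obtain ⟨k, rfl⟩ : ∃ k', k = k' + 1 := ⟨k - 1, by omega⟩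
  exact laguerreCoeff_le_coeff_P (n + 1) (k + 1)

theorem Polynomial.sum_coeff_mul_pow_le_eval {R : Type*} [CommSemiring R] [PartialOrder R]
    [IsOrderedRing R] {p : R[X]} (hp : ∀ k, 0 ≤ p.coeff k) {x : R} (hx : 0 ≤ x)
    (s : Finset ℕ) : ∑ k ∈ s, p.coeff k * x ^ k ≤ p.eval x := by
  classical
  rw [eval_eq_sum, Polynomial.sum_def]
  calc ∑ k ∈ s, p.coeff k * x ^ k ≤ ∑ k ∈ s ∪ p.support, p.coeff k * x ^ k :=
        sum_le_sum_of_subset_of_nonneg subset_union_left fun k _ _ => by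
          have := hp k
          positivity
    _ = ∑ k ∈ p.support, p.coeff k * x ^ k :=
        (sum_subset subset_union_right fun k _ hk => by
          rw [notMem_support_iff.mp hk, zero_mul]).symm

theorem stmt19_general (n : ℕ) :
    (∀ x : ℝ, 0 < x →
      ∑ k ∈ Finset.Icc 1 n, ((n - 1).choose (k - 1) : ℝ) * x ^ k / (k.factorial : ℝ)
        ≤ (P n).eval x) ∧
    (∀ m : ℕ, 1 ≤ m → m ≤ n →
      (1 / (m.factorial : ℝ)) * ((n - 1).choose (m - 1) : ℝ) ≤ (P n).coeff m) := by
  refine ⟨fun x hx => ?_, fun m hm hmn => ?_⟩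
  · calc ∑ k ∈ Icc 1 n, ((n - 1).choose (k - 1) : ℝ) * x ^ k / k.factorial
        ≤ ∑ k ∈ Icc 1 n, (P n).coeff k * x ^ k := sum_le_sum fun k hk => by
          rw [mul_div_right_comm]
          obtain ⟨hk, hkn⟩ := mem_Icc.mp hk
          gcongr
          exact choose_div_factorial_le_coeff_P hk hkn
      _ ≤ (P n).eval x := sum_coeff_mul_pow_le_eval (coeff_P_nonneg n) hx.le _
  · rw [one_div_mul_eq_div]
    exact choose_div_factorial_le_coeff_P hm hmn

theorem stmt19 (n : ℕ) (hn : 1 ≤ n) :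
    (∀ x : ℝ, 0 < x →
      ∑ k ∈ Finset.Icc 1 n, ((n - 1).choose (k - 1) : ℝ) * x ^ k / (k.factorial : ℝ)
        ≤ (P n).eval x) ∧
    (∀ m : ℕ, 1 ≤ m → m ≤ n →
      (1 / (m.factorial : ℝ)) * ((n - 1).choose (m - 1) : ℝ) ≤ (P n).coeff m) :=
  stmt19_general n
end
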